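/- The pair f(x) = 1, g(x) = ln x satisfies Eqs. (VIII)–(IX) at every x > 0, but does not satisfy Eq. (I) at any x > 0 (indeed for this pair the left side of (I) is 2/x³ while the right side is 3/(2x³)). -/

import Mathlib

/-- Eq. (I): `g''' = (3/10)·g'·(f')²/f² − (2/5)·g'·f''/f + (3/2)·(g'')²/g'`. -/
def SatEqI (f g : ℝ → ℝ) (x : ℝ) : Prop :=
  (deriv^[3] g x) =
    (3/10) * deriv g x * (deriv f x)^2 / (f x)^2
      - (2/5) * deriv g x * (deriv^[2] f x) / f x
      + (3/2) * (deriv^[2] g x)^2 / deriv g x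

/-- Eq. (VIII). -/
def SatEqVIII (f g : ℝ → ℝ) (x : ℝ) : Prop :=
  (deriv^[4] g x) =
    -3 * (deriv f x)^3 * deriv g x / (5 * (f x)^3)
      + deriv f x * deriv g x * (deriv^[2] f x) / (f x)^2
      - 3 * (deriv f x)^2 * (deriv^[2] g x) / (5 * (f x)^2)
      + 4 * (deriv^[2] f x) * (deriv^[2] g x) / (5 * f x)
      - 6 * (deriv^[2] g x)^3 / (deriv g x)^2
      - (2/5) * deriv g x * (deriv^[3] f x) / f x
      + 6 * (deriv^[2] g x) * (deriv^[3] g x) / deriv g x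

/-- Eq. (IX). -/
def SatEqIX (f g : ℝ → ℝ) (x : ℝ) : Prop :=
  (deriv^[5] f x) =
    -18 * (deriv f x)^5 / (5 * (f x)^4)
      + 54 * (deriv f x)^3 * (deriv^[2] f x) / (5 * (f x)^3)
      - 7 * deriv f x * (deriv^[2] f x)^2 / (f x)^2
      - 18 * (deriv f x)^4 * (deriv^[2] g x) / (5 * (f x)^3 * deriv g x)
      + 48 * (deriv f x)^2 * (deriv^[2] f x) * (deriv^[2] g x) / (5 * (f x)^2 * deriv g x)
      - 22 * (deriv^[2] f x)^2 * (deriv^[2] g x) / (5 * f x * deriv g x)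
      - 22 * (deriv f x)^2 * (deriv^[3] f x) / (5 * (f x)^2)
      + 16 * (deriv^[2] f x) * (deriv^[3] f x) / (5 * f x)
      - 4 * deriv f x * (deriv^[2] g x) * (deriv^[3] f x) / (f x * deriv g x)
      + 2 * deriv f x * (deriv^[4] f x) / f x
      + 4 * (deriv^[2] g x) * (deriv^[4] f x) / deriv g x

private lemma deriv_cz (c : ℝ) (n : ℤ) :
    deriv (fun x : ℝ => c * x ^ n) = fun x => (c * n) * x ^ (n - 1) := by
  funext x
  rw [deriv_const_mul_field, deriv_zpow]
  ring

private lemma dlog1 : deriv Real.log = fun x => (1 : ℝ) * x ^ (-1 : ℤ) := by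
  rw [Real.deriv_log']; funext x; simp [zpow_neg]

private lemma dlog2 : deriv^[2] Real.log = fun x => (-1 : ℝ) * x ^ (-2 : ℤ) := by
  show deriv (deriv Real.log) = _
  rw [dlog1, deriv_cz]; norm_num

private lemma dlog3 : deriv^[3] Real.log = fun x => (2 : ℝ) * x ^ (-3 : ℤ) := by
  show deriv (deriv^[2] Real.log) = _
  rw [dlog2, deriv_cz]; norm_num

private lemma dlog4 : deriv^[4] Real.log = fun x => (-6 : ℝ) * x ^ (-4 : ℤ) := by
  show deriv (deriv^[3] Real.log) = _
  rw [dlog3, deriv_cz]; norm_num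

private lemma dconst (n : ℕ) : deriv^[n + 1] (fun _ : ℝ => (1 : ℝ)) = fun _ => 0 := by
  induction n with
  | zero => funext x; simp
  | succ k ih =>
      rw [Function.iterate_succ', Function.comp_apply, ih]
      funext x; simp

/-- the pair `f(x) = 1`, `g(x) = ln x` satisfies Eqs. (VIII)–(IX) at every
`x > 0`, but not Eq. (I): the left side of (I) is `2/x³` while the right side is `3/(2x³)`. -/
theorem statement6 :
    ∀ x : ℝ, 0 < x →
      SatEqVIII (fun _ => 1) Real.log x ∧
      SatEqIX (fun _ => 1) Real.log x ∧
      ¬ SatEqI (fun _ => 1) Real.log x ∧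
      (deriv^[3] Real.log x) = 2 / x^3 ∧
      (3/10) * deriv Real.log x * (deriv (fun _ : ℝ => (1:ℝ)) x)^2 / ((1:ℝ))^2
        - (2/5) * deriv Real.log x * (deriv^[2] (fun _ : ℝ => (1:ℝ)) x) / (1:ℝ)
        + (3/2) * (deriv^[2] Real.log x)^2 / deriv Real.log x
        = 3 / (2 * x^3) := by
  intro x hx
  have hx0 : x ≠ 0 := ne_of_gt hx
  have hc1 : deriv (fun _ : ℝ => (1 : ℝ)) x = 0 := by simp
  have hc2 : deriv^[2] (fun _ : ℝ => (1 : ℝ)) x = 0 := by rw [dconst 1]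
  have hc3 : deriv^[3] (fun _ : ℝ => (1 : ℝ)) x = 0 := by rw [dconst 2]
  have hc4 : deriv^[4] (fun _ : ℝ => (1 : ℝ)) x = 0 := by rw [dconst 3]
  have hc5 : deriv^[5] (fun _ : ℝ => (1 : ℝ)) x = 0 := by rw [dconst 4]
  have hg1 : deriv Real.log x = x⁻¹ := Real.deriv_log x
  have hg2 : deriv^[2] Real.log x = -1 * x ^ (-2 : ℤ) := by rw [dlog2]
  have hg3 : deriv^[3] Real.log x = 2 * x ^ (-3 : ℤ) := by rw [dlog3]
  have hg4 : deriv^[4] Real.log x = -6 * x ^ (-4 : ℤ) := by rw [dlog4]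
  refine ⟨?_, ?_, ?_, ?_, ?_⟩
  · unfold SatEqVIII
    rw [hc1, hc2, hc3, hg1, hg2, hg3, hg4]
    simp only [zpow_neg, zpow_ofNat]
    field_simp
    ring
  · unfold SatEqIX
    rw [hc1, hc2, hc3, hc4, hc5, hg1, hg2]
    simp only [zpow_neg, zpow_ofNat]
    field_simp
    simp
  · unfold SatEqI
    rw [hc1, hc2, hg1, hg2, hg3]
    simp only [zpow_neg, zpow_ofNat]
    intro h
    field_simp at h
    nlinarith [pow_pos hx 3]
  · rw [hg3]
    simp only [zpow_neg, zpow_ofNat]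
    field_simp
  · rw [hc1, hc2, hg1, hg2]
    simp only [zpow_neg, zpow_ofNat]
    field_simp
    ring
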